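/- Let L > 0, κ > 0, w : [0,L] → ℝ continuous, and let μ be a finite Borel measure on [0,L] with total mass η := μ([0,L]) satisfying 0 < η ≤ 1. If w(x) ≥ 0 for all x ∈ [0,L], then the unique fixed point p* ∈ C([0,L]) of Ψ_{w,μ} satisfies p*(x) ≥ 0 for all x ∈ [0,L]. -/

import Mathlib

open MeasureTheory

/-- The market-price map `Ψ_{w,μ}(p)(x) = a + c·p̄ − (1/2)(a + c·p̄ − w(x))⁺`,
with `η = μ([0,L])`, `a = 1/(1+κη)`, `c = 1 − a` and `p̄ = (1/η)∫ p dμ`. -/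
noncomputable def Psi (L κ : ℝ) (w : C(Set.Icc (0:ℝ) L, ℝ))
    (μ : Measure (Set.Icc (0:ℝ) L)) (p : C(Set.Icc (0:ℝ) L, ℝ))
    (x : Set.Icc (0:ℝ) L) : ℝ :=
  let η : ℝ := (μ Set.univ).toReal
  let a : ℝ := 1 / (1 + κ * η)
  let c : ℝ := 1 - a
  let pbar : ℝ := (1 / η) * ∫ y, p y ∂μ
  a + c * pbar - (1 / 2) * max (a + c * pbar - w x) 0

/-- If `w ≥ 0`, then the (unique) fixed point of `Ψ_{w,μ}` is nonnegative. -/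
theorem Psi_fixedPoint_nonneg (L κ : ℝ) (hL : 0 < L) (hκ : 0 < κ)
    (w : C(Set.Icc (0:ℝ) L, ℝ)) (hw : ∀ x : Set.Icc (0:ℝ) L, 0 ≤ w x)
    (μ : Measure (Set.Icc (0:ℝ) L)) [IsFiniteMeasure μ]
    (hη : 0 < (μ Set.univ).toReal) (hη1 : (μ Set.univ).toReal ≤ 1)
    (pstar : C(Set.Icc (0:ℝ) L, ℝ))
    (hfix : ∀ x : Set.Icc (0:ℝ) L, Psi L κ w μ pstar x = pstar x) :
    ∀ x : Set.Icc (0:ℝ) L, 0 ≤ pstar x := by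
  set η : ℝ := (μ Set.univ).toReal with hηdef
  set a : ℝ := 1 / (1 + κ * η) with hadef
  set c : ℝ := 1 - a with hcdef
  set pbar : ℝ := (1 / η) * ∫ y, pstar y ∂μ with hpbardef
  set m : ℝ := a + c * pbar with hmdef
  have hfix' : ∀ y : Set.Icc (0:ℝ) L,
      pstar y = m - (1 / 2) * max (m - w y) 0 := fun y => (hfix y).symm
  have hden : (0:ℝ) < 1 + κ * η := by positivity
  have ha : 0 < a := by rw [hadef]; positivity
  rcases lt_or_ge m 0 with hm | hm
  · -- then pstar ≡ m, forcing m = 1, contradiction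
    exfalso
    have hconst : ∀ y : Set.Icc (0:ℝ) L, pstar y = m := by
      intro y
      have h0 : max (m - w y) 0 = 0 := max_eq_right (by linarith [hw y])
      rw [hfix' y, h0]; ring
    have hint : ∫ y, pstar y ∂μ = η * m := by
      have : ∫ y, pstar y ∂μ = ∫ _y, m ∂μ := by
        apply integral_congr_ae
        filter_upwards with y using hconst y
      rw [this, integral_const, smul_eq_mul, measureReal_def]
    have hpbar : pbar = m := by
      rw [hpbardef, hint]
      field_simp
    have key := hmdef
    rw [hpbar] at key
    have hc : c = 1 - a := hcdef
    nlinarith [key]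
  · intro x
    have hmax : max (m - w x) 0 ≤ m := max_le (by linarith [hw x]) hm
    rw [hfix' x]
    linarith
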